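/- Let S be a standard Borel space, p a probability measure on S, and μ a shift-invariant probability measure on S^{Z^d}. Then the sequence (1/(2n)^d) I(μ_{Λ_n}; p^{⊗Λ_n}) converges in [0,+∞] as n → ∞; in particular the specific entropy ℐ(μ), defined as the limsup of this sequence, is in fact its limit. -/

import Mathlib

open MeasureTheory Filter
open scoped ENNReal

/-- The lattice `ℤ^d`. -/
abbrev Zd (d : ℕ) := Fin d → ℤ

/-- The shift by vector `-i` on the configuration space `S^{ℤ^d}`:
`(θ_i ω)_j = ω_{j+i}`. -/
def shift (S : Type*) {d : ℕ} (i : Zd d) (ω : Zd d → S) : Zd d → S :=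
  fun j => ω (j + i)

/-- A measure on `S^{ℤ^d}` is shift-invariant if it is invariant under all shifts. -/
def ShiftInvariant {S : Type*} [MeasurableSpace S] {d : ℕ}
    (μ : Measure (Zd d → S)) : Prop :=
  ∀ i : Zd d, μ.map (shift S i) = μ

/-- The cube `Λ_n = {-n, …, n-1}^d` as a finite subset of `ℤ^d`. -/
noncomputable def cube (d n : ℕ) : Finset (Zd d) :=
  Finset.Icc (fun _ => -(n : ℤ)) (fun _ => (n : ℤ) - 1)

/-- The marginal of `μ` on the coordinates in `Λ`. -/
noncomputable def marginal {S : Type*} [MeasurableSpace S] {d : ℕ}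
    (μ : Measure (Zd d → S)) (Λ : Finset (Zd d)) : Measure (Λ → S) :=
  μ.map (fun ω (j : Λ) => ω j)

open Classical in
/-- The relative entropy `I(μ;ν) = ∫ log(dμ/dν) dμ` if `μ ≪ ν` (and the integral
makes sense), `+∞` otherwise. -/
noncomputable def relEnt {α : Type*} [MeasurableSpace α] (μ ν : Measure α) : ℝ≥0∞ :=
  if μ ≪ ν ∧ Integrable (llr μ ν) μ then ENNReal.ofReal (∫ x, llr μ ν x ∂μ) else ⊤

/-- The specific entropy of `μ` relative to the reference product measure `p^{⊗ℤ^d}`: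
`ℐ(μ) = limsup_n (1/(2n)^d) I(μ_{Λ_n}; p^{⊗Λ_n})`. -/
noncomputable def specEnt {S : Type*} [MeasurableSpace S] {d : ℕ}
    (p : Measure S) (μ : Measure (Zd d → S)) : ℝ≥0∞ :=
  Filter.limsup
    (fun n : ℕ =>
      relEnt (marginal μ (cube d n)) (Measure.pi fun _ : cube d n => p)
        / ((2 * n : ℝ≥0∞) ^ d))
    Filter.atTop




/-! ### Auxiliary development: a Donsker-Varadhan functional and its properties -/

/-- Bundled bounded measurable functions. -/
structure BddM (α : Type*) [MeasurableSpace α] where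
  u : α → ℝ
  meas : Measurable u
  C : ℝ
  bdd : ∀ x, |u x| ≤ C

instance {α : Type*} [MeasurableSpace α] : Nonempty (BddM α) :=
  ⟨⟨fun _ ↦ 0, measurable_const, 0, fun _ ↦ by simp⟩⟩

noncomputable def dvVal {α : Type*} [MeasurableSpace α] (μ ν : Measure α) (u : α → ℝ) : ℝ≥0∞ :=
  ENNReal.ofReal (∫ x, u x ∂μ - Real.log (∫ x, Real.exp (u x) ∂ν))

noncomputable def dv {α : Type*} [MeasurableSpace α] (μ ν : Measure α) : ℝ≥0∞ :=
  ⨆ b : BddM α, dvVal μ ν b.u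

section DVbasic
variable {α β : Type*} [MeasurableSpace α] [MeasurableSpace β] {μ ν : Measure α}

lemma le_dv {u : α → ℝ} (hu : Measurable u) {C : ℝ} (hC : ∀ x, |u x| ≤ C) :
    dvVal μ ν u ≤ dv μ ν := le_iSup (fun b : BddM α ↦ dvVal μ ν b.u) ⟨u, hu, C, hC⟩

lemma integrable_of_bounded' [IsFiniteMeasure μ] {u : α → ℝ} (hu : Measurable u)
    {C : ℝ} (hC : ∀ x, |u x| ≤ C) : Integrable u μ :=
  Integrable.mono' (integrable_const C) hu.aestronglyMeasurable (Filter.Eventually.of_forall hC)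

lemma integrable_exp_of_bounded' [IsFiniteMeasure ν] {u : α → ℝ} (hu : Measurable u)
    {C : ℝ} (hC : ∀ x, |u x| ≤ C) : Integrable (fun x ↦ Real.exp (u x)) ν := by
  refine Integrable.mono' (integrable_const (Real.exp C)) (hu.exp).aestronglyMeasurable
    (Filter.Eventually.of_forall fun x ↦ ?_)
  rw [Real.norm_eq_abs, abs_of_pos (Real.exp_pos _)]
  exact Real.exp_le_exp.2 ((abs_le.1 (hC x)).2)

/-- Data processing inequality, trivial for `dv`. -/
lemma dv_map_le {T : α → β} (hT : Measurable T) (μ ν : Measure α) :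
    dv (μ.map T) (ν.map T) ≤ dv μ ν := by
  refine iSup_le fun b ↦ ?_
  have h1 : ∫ x, b.u x ∂(μ.map T) = ∫ x, b.u (T x) ∂μ :=
    integral_map hT.aemeasurable b.meas.aestronglyMeasurable
  have h2 : ∫ x, Real.exp (b.u x) ∂(ν.map T) = ∫ x, Real.exp (b.u (T x)) ∂ν :=
    integral_map hT.aemeasurable (b.meas.exp).aestronglyMeasurable
  rw [dvVal, h1, h2]
  exact le_dv (b.meas.comp hT) (C := b.C) fun x ↦ b.bdd (T x)

end DVbasic

section DVprod
variable {X Y : Type*} [MeasurableSpace X] [MeasurableSpace Y]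

lemma dv_prod_superadd (ρ : Measure (X × Y)) [IsProbabilityMeasure ρ]
    (ν₁ : Measure X) (ν₂ : Measure Y) [IsProbabilityMeasure ν₁] [IsProbabilityMeasure ν₂] :
    dv (ρ.map Prod.fst) ν₁ + dv (ρ.map Prod.snd) ν₂ ≤ dv ρ (ν₁.prod ν₂) := by
  have hρ1 : IsProbabilityMeasure (ρ.map Prod.fst) := Measure.isProbabilityMeasure_map
    measurable_fst.aemeasurable
  have hρ2 : IsProbabilityMeasure (ρ.map Prod.snd) := Measure.isProbabilityMeasure_map
    measurable_snd.aemeasurable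
  -- key computation
  have key : ∀ b₁ : BddM X, ∀ b₂ : BddM Y,
      ENNReal.ofReal ((∫ x, b₁.u x ∂(ρ.map Prod.fst) - Real.log (∫ x, Real.exp (b₁.u x) ∂ν₁))
        + (∫ y, b₂.u y ∂(ρ.map Prod.snd) - Real.log (∫ y, Real.exp (b₂.u y) ∂ν₂)))
        ≤ dv ρ (ν₁.prod ν₂) := by
    intro b₁ b₂
    set u : X × Y → ℝ := fun z ↦ b₁.u z.1 + b₂.u z.2 with hu_def
    have hu : Measurable u := (b₁.meas.comp measurable_fst).add (b₂.meas.comp measurable_snd)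
    have hbdd : ∀ z, |u z| ≤ b₁.C + b₂.C := fun z ↦
      (abs_add_le _ _).trans (add_le_add (b₁.bdd z.1) (b₂.bdd z.2))
    have hint1 : Integrable (fun z : X × Y ↦ b₁.u z.1) ρ :=
      integrable_of_bounded' (b₁.meas.comp measurable_fst) (C := b₁.C) fun z ↦ b₁.bdd z.1
    have hint2 : Integrable (fun z : X × Y ↦ b₂.u z.2) ρ :=
      integrable_of_bounded' (b₂.meas.comp measurable_snd) (C := b₂.C) fun z ↦ b₂.bdd z.2
    have hIu : ∫ z, u z ∂ρ
        = ∫ x, b₁.u x ∂(ρ.map Prod.fst) + ∫ y, b₂.u y ∂(ρ.map Prod.snd) := by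
      rw [integral_map measurable_fst.aemeasurable b₁.meas.aestronglyMeasurable,
        integral_map measurable_snd.aemeasurable b₂.meas.aestronglyMeasurable]
      exact integral_add hint1 hint2
    have hIexp : ∫ z, Real.exp (u z) ∂(ν₁.prod ν₂)
        = (∫ x, Real.exp (b₁.u x) ∂ν₁) * ∫ y, Real.exp (b₂.u y) ∂ν₂ := by
      simp_rw [hu_def, Real.exp_add]
      exact integral_prod_mul (fun x ↦ Real.exp (b₁.u x)) (fun y ↦ Real.exp (b₂.u y))
    have hpos1 : 0 < ∫ x, Real.exp (b₁.u x) ∂ν₁ :=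
      integral_exp_pos (integrable_exp_of_bounded' b₁.meas b₁.bdd)
    have hpos2 : 0 < ∫ y, Real.exp (b₂.u y) ∂ν₂ :=
      integral_exp_pos (integrable_exp_of_bounded' b₂.meas b₂.bdd)
    have hlog : Real.log (∫ z, Real.exp (u z) ∂(ν₁.prod ν₂))
        = Real.log (∫ x, Real.exp (b₁.u x) ∂ν₁) + Real.log (∫ y, Real.exp (b₂.u y) ∂ν₂) := by
      rw [hIexp, Real.log_mul hpos1.ne' hpos2.ne']
    refine le_trans (le_of_eq ?_) (le_dv hu hbdd)
    rw [dvVal, hIu, hlog]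
    ring_nf
  -- now combine
  rw [dv, dv, ENNReal.iSup_add]
  refine iSup_le fun b₁ ↦ ?_
  rw [ENNReal.add_iSup]
  refine iSup_le fun b₂ ↦ ?_
  set v₁ := ∫ x, b₁.u x ∂(ρ.map Prod.fst) - Real.log (∫ x, Real.exp (b₁.u x) ∂ν₁) with hv₁
  set v₂ := ∫ y, b₂.u y ∂(ρ.map Prod.snd) - Real.log (∫ y, Real.exp (b₂.u y) ∂ν₂) with hv₂
  rcases le_or_gt v₁ 0 with h1 | h1
  · rw [dvVal, ← hv₁, ENNReal.ofReal_eq_zero.2 h1, zero_add]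
    rcases le_or_gt v₂ 0 with h2 | h2
    · rw [dvVal, ← hv₂, ENNReal.ofReal_eq_zero.2 h2]; exact zero_le
    · -- use test function with b₁ replaced by 0
      have := key ⟨fun _ ↦ 0, measurable_const, 0, fun _ ↦ by simp⟩ b₂
      simp only [integral_const, measure_univ, probReal_univ, ENNReal.toReal_one, smul_eq_mul, one_mul,
        Real.exp_zero, Real.log_one] at this
      rw [dvVal, ← hv₂]
      refine le_trans (le_of_eq ?_) this
      congr 1
      rw [hv₂]
      ring_nf
  · rcases le_or_gt v₂ 0 with h2 | h2
    · rw [dvVal, dvVal, ← hv₁, ← hv₂, ENNReal.ofReal_eq_zero.2 h2, add_zero]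
      have := key b₁ ⟨fun _ ↦ 0, measurable_const, 0, fun _ ↦ by simp⟩
      simp only [integral_const, measure_univ, probReal_univ, ENNReal.toReal_one, smul_eq_mul, one_mul,
        Real.exp_zero, Real.log_one] at this
      refine le_trans (le_of_eq ?_) this
      congr 1
      rw [hv₁]
      ring_nf
    · rw [dvVal, dvVal, ← hv₁, ← hv₂, ← ENNReal.ofReal_add h1.le h2.le]
      exact key b₁ b₂
end DVprod

section RelEntDV
open Real
variable {α : Type*} [MeasurableSpace α] {μ ν : Measure α}

lemma integral_llr_nonneg [IsProbabilityMeasure μ] [IsProbabilityMeasure ν]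
    (h : μ ≪ ν) (hint : Integrable (llr μ ν) μ) : 0 ≤ ∫ x, llr μ ν x ∂μ := by
  have hexp : (fun x ↦ Real.exp (- llr μ ν x)) =ᵐ[μ] fun x ↦ (ν.rnDeriv μ x).toReal :=
    exp_neg_llr h
  have hint2 : Integrable (fun x ↦ (ν.rnDeriv μ x).toReal) μ :=
    Measure.integrable_toReal_rnDeriv
  have hle : ∀ᵐ x ∂μ, - llr μ ν x ≤ (ν.rnDeriv μ x).toReal - 1 := by
    filter_upwards [hexp] with x hx
    have := Real.add_one_le_exp (- llr μ ν x)
    linarith [hx ▸ this]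
  have h1 : ∫ x, - llr μ ν x ∂μ ≤ ∫ x, ((ν.rnDeriv μ x).toReal - 1) ∂μ :=
    integral_mono_ae hint.neg (hint2.sub (integrable_const 1)) hle
  rw [integral_neg, integral_sub hint2 (integrable_const 1)] at h1
  have h2 : ∫ x, (ν.rnDeriv μ x).toReal ∂μ ≤ 1 := by
    have := Measure.setIntegral_toReal_rnDeriv_le (μ := ν) (ν := μ) (s := Set.univ)
      (measure_ne_top ν Set.univ)
    simpa using this
  simp only [integral_const, measure_univ, probReal_univ, ENNReal.toReal_one, smul_eq_mul, one_mul] at h1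
  linarith


end RelEntDV

open Real

section helpers
variable {α : Type*} [MeasurableSpace α] {μ ν : Measure α}

lemma ennreal_eq_top_of_forall {x : ℝ≥0∞} (h : ∀ c : ℝ, ENNReal.ofReal c ≤ x) : x = ⊤ := by
  by_contra hx
  have h1 := h (x.toReal + 1)
  have h2 : x < ENNReal.ofReal (x.toReal + 1) := by
    conv_lhs => rw [← ENNReal.ofReal_toReal hx]
    exact (ENNReal.ofReal_lt_ofReal_iff (by positivity)).2 (by linarith)
  exact absurd h1 (not_le.2 h2)

/-- negative part of llr is dominated. -/
lemma neg_llr_le [SigmaFinite μ] [SigmaFinite ν] (h : μ ≪ ν) :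
    ∀ᵐ x ∂μ, max (- llr μ ν x) 0 ≤ (ν.rnDeriv μ x).toReal := by
  filter_upwards [exp_neg_llr h] with x hx
  rw [← hx]
  refine max_le ?_ (Real.exp_pos _).le
  have := Real.add_one_le_exp (- llr μ ν x)
  linarith

lemma integrable_neg_llr_part [IsProbabilityMeasure μ] [IsProbabilityMeasure ν]
    (h : μ ≪ ν) : Integrable (fun x ↦ max (- llr μ ν x) 0) μ := by
  refine Integrable.mono' (Measure.integrable_toReal_rnDeriv (μ := ν) (ν := μ))
    ((measurable_llr μ ν).neg.max measurable_const).aestronglyMeasurable ?_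
  filter_upwards [neg_llr_le h] with x hx
  rwa [Real.norm_eq_abs, abs_of_nonneg (le_max_right _ _)]
end helpers

section trunc
variable {α : Type*} [MeasurableSpace α] {μ ν : Measure α}

/-- truncated log-likelihood test functions -/
noncomputable def trunc (μ ν : Measure α) (n : ℕ) (x : α) : ℝ :=
  min (Real.log (max ((μ.rnDeriv ν x).toReal) (Real.exp (-(n : ℝ))))) n

lemma trunc_measurable (μ ν : Measure α) (n : ℕ) : Measurable (trunc μ ν n) :=
  ((((Measure.measurable_rnDeriv μ ν).ennreal_toReal).max measurable_const).log).min
    measurable_const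

lemma trunc_abs_le (μ ν : Measure α) (n : ℕ) (x : α) : |trunc μ ν n x| ≤ n := by
  rw [abs_le]
  constructor
  · refine le_min ?_ (by exact_mod_cast (neg_nonpos.2 (Nat.cast_nonneg n)).trans (Nat.cast_nonneg n))
    calc -(n : ℝ) = Real.log (Real.exp (-(n:ℝ))) := (Real.log_exp _).symm
      _ ≤ _ := Real.log_le_log (Real.exp_pos _) (le_max_right _ _)
  · exact min_le_right _ _

lemma trunc_exp_le (μ ν : Measure α) (n : ℕ) (x : α) :
    Real.exp (trunc μ ν n x) ≤ (μ.rnDeriv ν x).toReal + Real.exp (-(n : ℝ)) := by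
  calc Real.exp (trunc μ ν n x)
      ≤ Real.exp (Real.log (max ((μ.rnDeriv ν x).toReal) (Real.exp (-(n : ℝ))))) :=
        Real.exp_le_exp.2 (min_le_left _ _)
    _ = max ((μ.rnDeriv ν x).toReal) (Real.exp (-(n : ℝ))) :=
        Real.exp_log (lt_of_lt_of_le (Real.exp_pos _) (le_max_right _ _))
    _ ≤ _ := max_le (le_add_of_nonneg_right (Real.exp_pos _).le)
        (le_add_of_nonneg_left ENNReal.toReal_nonneg)

lemma trunc_integral_exp_le [IsProbabilityMeasure μ] [IsProbabilityMeasure ν]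
    (hac : μ ≪ ν) (n : ℕ) :
    ∫ x, Real.exp (trunc μ ν n x) ∂ν ≤ 1 + Real.exp (-(n : ℝ)) := by
  have h1 : Integrable (fun x ↦ Real.exp (trunc μ ν n x)) ν := by
    refine Integrable.mono' (integrable_const (Real.exp n)) ((trunc_measurable μ ν n).exp).aestronglyMeasurable ?_
    refine Filter.Eventually.of_forall fun x ↦ ?_
    rw [Real.norm_eq_abs, abs_of_pos (Real.exp_pos _)]
    exact Real.exp_le_exp.2 ((abs_le.1 (trunc_abs_le μ ν n x)).2)
  have h2 : Integrable (fun x ↦ (μ.rnDeriv ν x).toReal + Real.exp (-(n:ℝ))) ν :=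
    Measure.integrable_toReal_rnDeriv.add (integrable_const _)
  calc ∫ x, Real.exp (trunc μ ν n x) ∂ν
      ≤ ∫ x, ((μ.rnDeriv ν x).toReal + Real.exp (-(n:ℝ))) ∂ν :=
        integral_mono h1 h2 (trunc_exp_le μ ν n)
    _ = (μ Set.univ).toReal + Real.exp (-(n:ℝ)) := by
        rw [integral_add Measure.integrable_toReal_rnDeriv (integrable_const _),
          Measure.integral_toReal_rnDeriv hac]
        simp
    _ = 1 + Real.exp (-(n:ℝ)) := by simp

/-- log of the exp-integral of trunc is at most `exp(-n) ≤ 1`. -/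
lemma trunc_log_integral_le [IsProbabilityMeasure μ] [IsProbabilityMeasure ν]
    (hac : μ ≪ ν) (n : ℕ) :
    Real.log (∫ x, Real.exp (trunc μ ν n x) ∂ν) ≤ Real.exp (-(n : ℝ)) := by
  have h0 : (0:ℝ) < ∫ x, Real.exp (trunc μ ν n x) ∂ν := by
    refine integral_exp_pos ?_
    refine Integrable.mono' (integrable_const (Real.exp n)) ((trunc_measurable μ ν n).exp).aestronglyMeasurable ?_
    refine Filter.Eventually.of_forall fun x ↦ ?_
    rw [Real.norm_eq_abs, abs_of_pos (Real.exp_pos _)]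
    exact Real.exp_le_exp.2 ((abs_le.1 (trunc_abs_le μ ν n x)).2)
  calc Real.log (∫ x, Real.exp (trunc μ ν n x) ∂ν)
      ≤ Real.log (1 + Real.exp (-(n:ℝ))) :=
        Real.log_le_log h0 (trunc_integral_exp_le hac n)
    _ ≤ (1 + Real.exp (-(n:ℝ))) - 1 := Real.log_le_sub_one_of_pos (by positivity)
    _ = Real.exp (-(n:ℝ)) := by ring

/-- pointwise bound against |llr| where the density is positive. -/
lemma trunc_abs_le_abs_llr {n : ℕ} {x : α} (hx : 0 < (μ.rnDeriv ν x).toReal) :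
    |trunc μ ν n x| ≤ |llr μ ν x| := by
  set f := (μ.rnDeriv ν x).toReal with hf
  have hllr : llr μ ν x = Real.log f := rfl
  rcases le_or_gt 1 f with h1 | h1
  · have hmax : max f (Real.exp (-(n:ℝ))) = f :=
      max_eq_left ((Real.exp_le_one_iff.2 (by simp)).trans h1)
    have hlog : 0 ≤ Real.log f := Real.log_nonneg h1
    rw [trunc, hmax, hllr, abs_of_nonneg hlog, abs_of_nonneg (le_min hlog (Nat.cast_nonneg n))]
    exact min_le_left _ _
  · have hmax : Real.log (max f (Real.exp (-(n:ℝ)))) ≤ 0 := by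
      refine Real.log_nonpos (le_max_of_le_right (Real.exp_pos _).le) ?_
      exact max_le h1.le (Real.exp_le_one_iff.2 (by simp))
    have hmin : trunc μ ν n x = Real.log (max f (Real.exp (-(n:ℝ)))) :=
      min_eq_left (hmax.trans (Nat.cast_nonneg n))
    have hllr_neg : Real.log f ≤ 0 := Real.log_nonpos ENNReal.toReal_nonneg h1.le
    rw [hmin, hllr, abs_of_nonpos hmax, abs_of_nonpos hllr_neg, neg_le_neg_iff]
    exact Real.log_le_log hx (le_max_left _ _)

/-- pointwise eventual equality with llr where density positive. -/
lemma trunc_tendsto {x : α} (hx : 0 < (μ.rnDeriv ν x).toReal) :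
    Tendsto (fun n : ℕ ↦ trunc μ ν n x) atTop (nhds (llr μ ν x)) := by
  set f := (μ.rnDeriv ν x).toReal with hf
  refine tendsto_const_nhds.congr' ?_
  rw [Filter.EventuallyEq, eventually_atTop]
  refine ⟨⌈|Real.log f|⌉₊, fun n hn ↦ ?_⟩
  have hn' : |Real.log f| ≤ (n : ℝ) := (Nat.le_ceil _).trans (by exact_mod_cast hn)
  have h1 : Real.exp (-(n:ℝ)) ≤ f := by
    rw [← Real.exp_log hx]
    exact Real.exp_le_exp.2 (by cases abs_le.1 hn'; linarith)
  have h2 : Real.log f ≤ (n : ℝ) := (le_abs_self _).trans hn'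
  rw [llr, trunc, max_eq_left h1, min_eq_left h2]

end trunc

section trunc2
variable {α : Type*} [MeasurableSpace α] {μ ν : Measure α}

lemma trunc_pos_part (μ ν : Measure α) (n : ℕ) (x : α) :
    max (trunc μ ν n x) 0 = min (max (llr μ ν x) 0) n := by
  set f := (μ.rnDeriv ν x).toReal with hf
  have hllr : llr μ ν x = Real.log f := rfl
  rcases le_or_gt 1 f with h1 | h1
  · have hmax : max f (Real.exp (-(n:ℝ))) = f :=
      max_eq_left ((Real.exp_le_one_iff.2 (by simp)).trans h1)
    have hlog : 0 ≤ Real.log f := Real.log_nonneg h1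
    rw [trunc, hmax, hllr, max_eq_left hlog, max_eq_left (le_min hlog (Nat.cast_nonneg n))]
  · have hmax : Real.log (max f (Real.exp (-(n:ℝ)))) ≤ 0 := by
      refine Real.log_nonpos (le_max_of_le_right (Real.exp_pos _).le) ?_
      exact max_le h1.le (Real.exp_le_one_iff.2 (by simp))
    have hmin : trunc μ ν n x = Real.log (max f (Real.exp (-(n:ℝ)))) :=
      min_eq_left (hmax.trans (Nat.cast_nonneg n))
    have hllr_neg : Real.log f ≤ 0 := Real.log_nonpos ENNReal.toReal_nonneg h1.le
    rw [hmin, hllr, max_eq_right hmax, max_eq_right hllr_neg,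
      min_eq_left (Nat.cast_nonneg n)]

lemma trunc_neg_part_le {n : ℕ} {x : α} (hx : 0 < (μ.rnDeriv ν x).toReal) :
    max (- trunc μ ν n x) 0 ≤ max (- llr μ ν x) 0 := by
  set f := (μ.rnDeriv ν x).toReal with hf
  have hllr : llr μ ν x = Real.log f := rfl
  rcases le_or_gt 1 f with h1 | h1
  · have hmax : max f (Real.exp (-(n:ℝ))) = f :=
      max_eq_left ((Real.exp_le_one_iff.2 (by simp)).trans h1)
    have hlog : 0 ≤ Real.log f := Real.log_nonneg h1
    have : 0 ≤ trunc μ ν n x := by rw [trunc, hmax]; exact le_min hlog (Nat.cast_nonneg n)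
    rw [max_eq_right (neg_nonpos.2 this)]
    exact le_max_right _ _
  · refine max_le_max (neg_le_neg ?_) le_rfl
    have hllr_neg : Real.log f ≤ 0 := Real.log_nonpos ENNReal.toReal_nonneg h1.le
    rw [hllr, trunc]
    exact le_min (Real.log_le_log hx (le_max_left _ _)) (hllr_neg.trans (Nat.cast_nonneg n))

end trunc2

section MainComparison
variable {α : Type*} [MeasurableSpace α] {μ ν : Measure α}

lemma rnDeriv_toReal_pos [SigmaFinite μ] [SigmaFinite ν] (hac : μ ≪ ν) :
    ∀ᵐ x ∂μ, 0 < (μ.rnDeriv ν x).toReal := by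
  filter_upwards [Measure.rnDeriv_pos hac, hac.ae_le (Measure.rnDeriv_lt_top μ ν)] with x h1 h2
  exact ENNReal.toReal_pos h1.ne' h2.ne

lemma dv_eq_top_of_not_ac [IsProbabilityMeasure μ] [IsProbabilityMeasure ν]
    (hac : ¬ μ ≪ ν) : dv μ ν = ⊤ := by
  have hex : ∃ s, ν s = 0 ∧ μ s ≠ 0 := by
    by_contra h
    push_neg at h
    exact hac (Measure.AbsolutelyContinuous.mk fun s _ hs ↦ h s hs)
  obtain ⟨s, hs, hμs⟩ := hex
  set A := toMeasurable ν s with hA_def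
  have hA : MeasurableSet A := measurableSet_toMeasurable ν s
  have hνA : ν A = 0 := by rw [hA_def, measure_toMeasurable]; exact hs
  have hμA : 0 < (μ A).toReal := by
    refine ENNReal.toReal_pos ?_ (measure_ne_top μ A)
    exact fun h ↦ hμs (le_antisymm (h ▸ measure_mono (subset_toMeasurable ν s)) zero_le)
  refine ennreal_eq_top_of_forall fun r ↦ ?_
  set c := r / (μ A).toReal with hc
  set u := A.indicator (fun _ ↦ c) with hu_def
  have hu : Measurable u := measurable_const.indicator hA
  have hb : ∀ x, |u x| ≤ |c| := by
    intro x
    by_cases hx : x ∈ A <;> simp [hu_def, Set.indicator_of_mem, Set.indicator_of_notMem, hx]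
  have h1 : ∫ x, u x ∂μ = r := by
    rw [hu_def, integral_indicator_const c hA, smul_eq_mul, hc, measureReal_def]
    field_simp
  have h2 : ∫ x, Real.exp (u x) ∂ν = 1 := by
    have heq : (fun x ↦ Real.exp (u x)) = fun x ↦ A.indicator (fun _ ↦ Real.exp c - 1) x + 1 := by
      funext x
      by_cases hx : x ∈ A <;>
        simp [hu_def, Set.indicator_of_mem, Set.indicator_of_notMem, hx]
    rw [heq, integral_add ((integrable_const _).indicator hA) (integrable_const 1),
      integral_indicator_const _ hA, measureReal_def, hνA]
    simp
  have hle := le_dv (μ := μ) (ν := ν) hu hb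
  rw [dvVal, h1, h2, Real.log_one, sub_zero] at hle
  exact hle

lemma relEnt_le_dv [IsProbabilityMeasure μ] [IsProbabilityMeasure ν] :
    relEnt μ ν ≤ dv μ ν := by
  by_cases hac : μ ≪ ν
  swap
  · rw [dv_eq_top_of_not_ac hac]; exact le_top
  by_cases hint : Integrable (llr μ ν) μ
  · -- main case: DCT on truncations
    rw [relEnt, if_pos ⟨hac, hint⟩]
    have hpos := rnDeriv_toReal_pos (μ := μ) (ν := ν) hac
    have tendsto1 : Tendsto (fun n : ℕ ↦ ∫ x, trunc μ ν n x ∂μ) atTop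
        (nhds (∫ x, llr μ ν x ∂μ)) := by
      refine tendsto_integral_of_dominated_convergence (fun x ↦ |llr μ ν x|)
        (fun n ↦ (trunc_measurable μ ν n).aestronglyMeasurable) hint.abs ?_ ?_
      · intro n
        filter_upwards [hpos] with x hx
        rw [Real.norm_eq_abs]
        exact trunc_abs_le_abs_llr hx
      · filter_upwards [hpos] with x hx
        exact trunc_tendsto hx
    have tendsto2 : Tendsto (fun n : ℕ ↦ Real.exp (-(n : ℝ))) atTop (nhds 0) :=
      Real.tendsto_exp_neg_atTop_nhds_zero.comp tendsto_natCast_atTop_atTop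
    have tendsto3 : Tendsto (fun n : ℕ ↦ ∫ x, trunc μ ν n x ∂μ - Real.exp (-(n : ℝ)))
        atTop (nhds (∫ x, llr μ ν x ∂μ)) := by
      simpa using tendsto1.sub tendsto2
    refine le_of_tendsto' (ENNReal.tendsto_ofReal tendsto3) fun n ↦ ?_
    have hle := le_dv (μ := μ) (ν := ν) (trunc_measurable μ ν n) (trunc_abs_le μ ν n)
    rw [dvVal] at hle
    refine le_trans (ENNReal.ofReal_le_ofReal ?_) hle
    have := trunc_log_integral_le hac n
    linarith
  · -- llr not integrable: dv = ⊤
    have hdv : dv μ ν = ⊤ := by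
      refine ennreal_eq_top_of_forall fun r ↦ ?_
      rcases le_or_gt r 0 with hr | hr
      · rw [ENNReal.ofReal_eq_zero.2 hr]; exact zero_le
      set K := ∫ x, max (- llr μ ν x) 0 ∂μ with hK_def
      have hK : 0 ≤ K := integral_nonneg fun x ↦ le_max_right _ _
      have hKint := integrable_neg_llr_part hac
      have hpos := rnDeriv_toReal_pos (μ := μ) (ν := ν) hac
      -- the lintegral of the positive part is infinite
      have vtop : ∫⁻ x, ENNReal.ofReal (max (llr μ ν x) 0) ∂μ = ⊤ := by
        by_contra h
        have hmeas : Measurable fun x ↦ max (llr μ ν x) 0 :=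
          (measurable_llr μ ν).max measurable_const
        have hintpos : Integrable (fun x ↦ max (llr μ ν x) 0) μ := by
          have h1 : Integrable (fun x ↦
              (ENNReal.ofReal (max (llr μ ν x) 0)).toReal) μ :=
            integrable_toReal_of_lintegral_ne_top
              (ENNReal.measurable_ofReal.comp hmeas).aemeasurable h
          refine h1.congr (Filter.Eventually.of_forall fun x ↦ ?_)
          exact ENNReal.toReal_ofReal (le_max_right _ _)
        have h2 : Integrable (fun x ↦ max (llr μ ν x) 0 - max (- llr μ ν x) 0) μ :=
          hintpos.sub hKint
        refine hint (h2.congr (Filter.Eventually.of_forall fun x ↦ ?_))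
        exact max_zero_sub_max_neg_zero_eq_self _
      have hsup : (⨆ n : ℕ, ∫⁻ x, ENNReal.ofReal (max (trunc μ ν n x) 0) ∂μ) = ⊤ := by
        have hmono : Monotone fun n : ℕ ↦ fun x ↦ ENNReal.ofReal (max (trunc μ ν n x) 0) := by
          intro n m hnm
          refine fun x ↦ ENNReal.ofReal_le_ofReal ?_
          rw [trunc_pos_part, trunc_pos_part]
          exact min_le_min le_rfl (by exact_mod_cast hnm)
        have hls := lintegral_iSup (μ := μ)
          (f := fun n x ↦ ENNReal.ofReal (max (trunc μ ν n x) 0))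
          (fun n ↦ ((trunc_measurable μ ν n).max measurable_const).ennreal_ofReal) hmono
        rw [← hls, ← vtop]
        refine lintegral_congr fun x ↦ ?_
        refine le_antisymm (iSup_le fun n ↦ ENNReal.ofReal_le_ofReal ?_) ?_
        · rw [trunc_pos_part]; exact min_le_left _ _
        · refine le_iSup_of_le ⌈max (llr μ ν x) 0⌉₊ (ENNReal.ofReal_le_ofReal ?_)
          rw [trunc_pos_part]
          exact le_min le_rfl (Nat.le_ceil _)
      obtain ⟨n, hn⟩ : ∃ n : ℕ, ENNReal.ofReal (r + K + 1)
          < ∫⁻ x, ENNReal.ofReal (max (trunc μ ν n x) 0) ∂μ := by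
        rw [← lt_iSup_iff, hsup]
        exact ENNReal.ofReal_lt_top
      have hintp : Integrable (fun x ↦ max (trunc μ ν n x) 0) μ :=
        integrable_of_bounded' ((trunc_measurable μ ν n).max measurable_const)
          (C := n) fun x ↦ abs_le.2 ⟨(neg_nonpos.2 (Nat.cast_nonneg n)).trans (le_max_right _ _),
            max_le ((le_abs_self _).trans (trunc_abs_le μ ν n x)) (Nat.cast_nonneg n)⟩
      have hintm : Integrable (fun x ↦ max (- trunc μ ν n x) 0) μ :=
        integrable_of_bounded' (((trunc_measurable μ ν n).neg).max measurable_const)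
          (C := n) fun x ↦ abs_le.2 ⟨(neg_nonpos.2 (Nat.cast_nonneg n)).trans (le_max_right _ _),
            max_le ((neg_le_abs _).trans (trunc_abs_le μ ν n x)) (Nat.cast_nonneg n)⟩
      have hfin : ∫⁻ x, ENNReal.ofReal (max (trunc μ ν n x) 0) ∂μ ≠ ⊤ := by
        refine ne_top_of_le_ne_top (b := ENNReal.ofReal n) ENNReal.ofReal_ne_top ?_
        calc ∫⁻ x, ENNReal.ofReal (max (trunc μ ν n x) 0) ∂μ
            ≤ ∫⁻ _, ENNReal.ofReal (n : ℝ) ∂μ := by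
              refine lintegral_mono fun x ↦ ENNReal.ofReal_le_ofReal ?_
              exact max_le ((le_abs_self _).trans (trunc_abs_le μ ν n x)) (Nat.cast_nonneg n)
          _ = ENNReal.ofReal (n : ℝ) := by simp
      have hpint : ∫ x, max (trunc μ ν n x) 0 ∂μ
          = (∫⁻ x, ENNReal.ofReal (max (trunc μ ν n x) 0) ∂μ).toReal := by
        exact integral_eq_lintegral_of_nonneg_ae
          (f := fun x ↦ max (trunc μ ν n x) 0)
          (Filter.Eventually.of_forall fun x ↦ le_max_right _ _)
          ((trunc_measurable μ ν n).max measurable_const).aestronglyMeasurable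
      have h2 : r + K + 1 < ∫ x, max (trunc μ ν n x) 0 ∂μ := by
        rw [hpint]
        have := (ENNReal.toReal_lt_toReal ENNReal.ofReal_ne_top hfin).2 hn
        rwa [ENNReal.toReal_ofReal (by linarith)] at this
      have hsplit : ∫ x, trunc μ ν n x ∂μ
          = ∫ x, max (trunc μ ν n x) 0 ∂μ - ∫ x, max (- trunc μ ν n x) 0 ∂μ := by
        rw [← integral_sub hintp hintm]
        refine integral_congr_ae (Filter.Eventually.of_forall fun x ↦ ?_)
        exact (max_zero_sub_max_neg_zero_eq_self _).symm
      have hneg_le : ∫ x, max (- trunc μ ν n x) 0 ∂μ ≤ K := by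
        refine integral_mono_ae hintm hKint ?_
        filter_upwards [hpos] with x hx
        exact trunc_neg_part_le hx
      have hle := le_dv (μ := μ) (ν := ν) (trunc_measurable μ ν n) (trunc_abs_le μ ν n)
      rw [dvVal] at hle
      refine le_trans (ENNReal.ofReal_le_ofReal ?_) hle
      have hlog := trunc_log_integral_le hac n
      have hexp1 : Real.exp (-(n : ℝ)) ≤ 1 := Real.exp_le_one_iff.2 (by simp)
      rw [hsplit]
      linarith
    rw [hdv]; exact le_top


lemma dv_le_relEnt [IsProbabilityMeasure μ] [IsProbabilityMeasure ν] :
    dv μ ν ≤ relEnt μ ν := by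
  rw [relEnt]
  split_ifs with hc
  swap
  · exact le_top
  obtain ⟨hac, hint⟩ := hc
  refine iSup_le fun b ↦ ?_
  rw [dvVal]
  refine ENNReal.ofReal_le_ofReal ?_
  have huμ : Integrable b.u μ := integrable_of_bounded' b.meas b.bdd
  have hexp : Integrable (fun x ↦ Real.exp (b.u x)) ν := integrable_exp_of_bounded' b.meas b.bdd
  have hν' : IsProbabilityMeasure (ν.tilted b.u) := isProbabilityMeasure_tilted hexp
  have hac' : μ ≪ ν.tilted b.u := hac.trans (absolutelyContinuous_tilted hexp)
  have hint' : Integrable (llr μ (ν.tilted b.u)) μ :=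
    integrable_llr_tilted_right hac huμ hint hexp
  have hgibbs : 0 ≤ ∫ x, llr μ (ν.tilted b.u) x ∂μ := integral_llr_nonneg hac' hint'
  rw [integral_llr_tilted_right hac huμ hexp hint] at hgibbs
  linarith

lemma relEnt_eq_dv [IsProbabilityMeasure μ] [IsProbabilityMeasure ν] :
    relEnt μ ν = dv μ ν :=
  le_antisymm relEnt_le_dv dv_le_relEnt

end MainComparison

section Pi
variable {S : Type*} [MeasurableSpace S] (p : Measure S) [IsProbabilityMeasure p]

/-- mapping a product measure along an injective reindexing of coordinates. -/
lemma pi_map_comp {ι ι' : Type*} [Fintype ι] [Fintype ι'] (g : ι → ι')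
    (hg : Function.Injective g) :
    (Measure.pi fun _ : ι' => p).map (fun f (j : ι) => f (g j))
      = Measure.pi fun _ : ι => p := by
  classical
  refine (Measure.pi_eq fun s hs => ?_).symm
  set s' : ι' → Set S := fun i' => if h : ∃ j, g j = i' then s h.choose else Set.univ with hs'_def
  have hs' : ∀ i', MeasurableSet (s' i') := by
    intro i'
    by_cases h : ∃ j, g j = i'
    · simp only [hs'_def, dif_pos h]; exact hs _
    · simp only [hs'_def, dif_neg h]; exact MeasurableSet.univ
  have hmeas : Measurable (fun f : ι' → S => fun j : ι => f (g j)) :=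
    measurable_pi_lambda _ fun j => measurable_pi_apply _
  have hpre : (fun f : ι' → S => fun j : ι => f (g j)) ⁻¹' (Set.pi Set.univ s)
      = Set.pi Set.univ s' := by
    ext f
    simp only [Set.mem_preimage, Set.mem_pi, Set.mem_univ, forall_true_left, true_implies]
    constructor
    · intro h i'
      by_cases hex : ∃ j, g j = i'
      · simp only [hs'_def, dif_pos hex]
        have := h hex.choose
        rwa [hex.choose_spec] at this
      · simp [hs'_def, dif_neg hex]
    · intro h j
      have := h (g j)
      have hex : ∃ j', g j' = g j := ⟨j, rfl⟩
      rw [hs'_def] at this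
      simp only [dif_pos hex] at this
      rwa [hg hex.choose_spec] at this
  rw [Measure.map_apply hmeas (MeasurableSet.univ_pi hs), hpre, Measure.pi_pi]
  -- now the product identity
  have h1 : ∀ i' ∈ Finset.univ, i' ∉ Finset.univ.image g → p (s' i') = 1 := by
    intro i' _ hi'
    have hex : ¬ ∃ j, g j = i' := by simpa [Finset.mem_image] using hi'
    simp [hs'_def, dif_neg hex]
  calc ∏ i' : ι', p (s' i')
      = ∏ i' ∈ Finset.univ.image g, p (s' i') :=
        (Finset.prod_subset (Finset.subset_univ _) h1).symm
    _ = ∏ j : ι, p (s' (g j)) := Finset.prod_image (fun a _ b _ h => hg h)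
    _ = ∏ j, p (s j) := by
        refine Finset.prod_congr rfl fun j _ => ?_
        have hex : ∃ j', g j' = g j := ⟨j, rfl⟩
        simp only [hs'_def, dif_pos hex]
        rw [hg hex.choose_spec]
end Pi

section Reindex
variable {S : Type*} [MeasurableSpace S] (p : Measure S) [IsProbabilityMeasure p]

lemma measurable_reindex {ι ι' : Type*} (g : ι → ι') :
    Measurable (fun f : ι' → S => fun j : ι => f (g j)) :=
  measurable_pi_lambda _ fun j => measurable_pi_apply _

lemma dv_reindex {ι ι' : Type*} [Fintype ι] [Fintype ι'] (ν : Measure (ι' → S)) (g : ι ≃ ι') :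
    dv (ν.map (fun f (j : ι) => f (g j))) (Measure.pi fun _ : ι => p)
      = dv ν (Measure.pi fun _ : ι' => p) := by
  refine le_antisymm ?_ ?_
  · rw [← pi_map_comp p g g.injective]
    exact dv_map_le (measurable_reindex g) _ _
  · have hcomp : (ν.map (fun f (j : ι) => f (g j))).map
        (fun f (j' : ι') => f (g.symm j')) = ν := by
      rw [Measure.map_map (measurable_reindex g.symm) (measurable_reindex g)]
      have heq : ((fun (f : ι → S) (j' : ι') => f (g.symm j'))
          ∘ (fun (f : ι' → S) (j : ι) => f (g j))) = id := by
        funext f j'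
        simp only [Function.comp_apply, id_eq, Equiv.apply_symm_apply]
      rw [heq, Measure.map_id]
    conv_lhs => rw [← hcomp, ← pi_map_comp p g.symm g.symm.injective]
    exact dv_map_le (measurable_reindex g.symm) _ _

end Reindex

section Marginals
variable {S : Type*} [MeasurableSpace S] (p : Measure S) [IsProbabilityMeasure p]
  {d : ℕ} (μ : Measure (Zd d → S)) [IsProbabilityMeasure μ]

lemma measurable_restr (Λ : Finset (Zd d)) :
    Measurable (fun ω : Zd d → S => fun j : Λ => ω j) :=
  measurable_pi_lambda _ fun j => measurable_pi_apply _

instance marginal_prob (Λ : Finset (Zd d)) : IsProbabilityMeasure (marginal μ Λ) :=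
  Measure.isProbabilityMeasure_map (measurable_restr Λ).aemeasurable

/-- dv of marginals is monotone in the region. -/
lemma dv_marginal_mono {Λ₁ Λ₂ : Finset (Zd d)} (h : Λ₁ ⊆ Λ₂) :
    dv (marginal μ Λ₁) (Measure.pi fun _ : Λ₁ => p)
      ≤ dv (marginal μ Λ₂) (Measure.pi fun _ : Λ₂ => p) := by
  set T : (Λ₂ → S) → (Λ₁ → S) := fun f j => f ⟨j.1, h j.2⟩ with hT_def
  have hT : Measurable T := measurable_pi_lambda _ fun j => measurable_pi_apply _
  have hm : (marginal μ Λ₂).map T = marginal μ Λ₁ := by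
    rw [marginal, Measure.map_map hT (measurable_restr Λ₂)]
    rfl
  have hp : ((Measure.pi fun _ : Λ₂ => p)).map T = Measure.pi fun _ : Λ₁ => p :=
    pi_map_comp p (fun j : Λ₁ => (⟨j.1, h j.2⟩ : Λ₂))
      (fun a b hab => Subtype.ext (congrArg (fun x : Λ₂ => (x : Zd d)) hab))
  rw [← hm, ← hp]
  exact dv_map_le hT _ _

/-- dv of marginals is invariant under translations of the region. -/
lemma dv_marginal_translate (hinv : ShiftInvariant μ) (v : Zd d) (Λ : Finset (Zd d)) :
    dv (marginal μ (Λ.map ⟨fun j => j + v, fun a b hab => by simpa using hab⟩))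
        (Measure.pi fun _ : (Λ.map ⟨fun j => j + v, fun a b hab => by simpa using hab⟩) => p)
      = dv (marginal μ Λ) (Measure.pi fun _ : Λ => p) := by
  set emb : Zd d ↪ Zd d := ⟨fun j => j + v, fun a b hab => by simpa using hab⟩ with hemb
  set Λ' := Λ.map emb with hΛ'
  have hg : ∀ j : Λ, (j : Zd d) + v ∈ Λ' := fun j => Finset.mem_map_of_mem _ j.2
  set g : Λ ≃ Λ' :=
    { toFun := fun j => ⟨(j : Zd d) + v, hg j⟩
      invFun := fun j' => ⟨(j' : Zd d) - v, by
        obtain ⟨a, ha, hav⟩ := Finset.mem_map.1 j'.2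
        have : a = (j' : Zd d) - v := by
          simp only [hemb, Function.Embedding.coeFn_mk] at hav
          exact eq_sub_of_add_eq hav
        rwa [← this]⟩
      left_inv := fun j => by ext; simp
      right_inv := fun j' => by ext; simp } with hgdef
  rw [← dv_reindex p (marginal μ Λ') g]
  congr 1
  -- (marginal μ Λ').map (reindex g) = marginal μ Λ
  rw [marginal, Measure.map_map (measurable_reindex g) (measurable_restr Λ')]
  have h1 : ((fun (f : Λ' → S) (j : Λ) => f (g j)) ∘ (fun (ω : Zd d → S) (j : Λ') => ω j))
      = fun (ω : Zd d → S) (j : Λ) => ω ((j : Zd d) + v) := rfl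
  rw [h1]
  have hshift : Measurable (shift S v) := measurable_pi_lambda _ fun j => measurable_pi_apply _
  conv_rhs => rw [marginal, ← hinv v]
  rw [Measure.map_map (measurable_restr Λ) hshift]
  rfl

end Marginals

section Superadd
variable {S : Type*} [MeasurableSpace S] (p : Measure S) [IsProbabilityMeasure p]
  {d : ℕ} (μ : Measure (Zd d → S)) [IsProbabilityMeasure μ]

lemma dv_marginal_superadd {Λ₁ Λ₂ : Finset (Zd d)} (hdisj : Disjoint Λ₁ Λ₂) :
    dv (marginal μ Λ₁) (Measure.pi fun _ : Λ₁ => p)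
      + dv (marginal μ Λ₂) (Measure.pi fun _ : Λ₂ => p)
      ≤ dv (marginal μ (Λ₁ ∪ Λ₂)) (Measure.pi fun _ : (Λ₁ ∪ Λ₂ : Finset (Zd d)) => p) := by
  classical
  set Λ : Finset (Zd d) := Λ₁ ∪ Λ₂ with hΛdef
  set q : Λ → Prop := fun j => (j : Zd d) ∈ Λ₁ with hqdef
  set e := MeasurableEquiv.piEquivPiSubtypeProd (fun _ : Λ => S) q with hedef
  set ρ := (marginal μ Λ).map e with hρdef
  haveI : IsProbabilityMeasure ρ := Measure.isProbabilityMeasure_map e.measurable.aemeasurable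
  set g₁ : {j : Λ // q j} ≃ Λ₁ :=
    { toFun := fun j => ⟨j.1.1, j.2⟩
      invFun := fun j => ⟨⟨j.1, Finset.mem_union_left _ j.2⟩, j.2⟩
      left_inv := fun j => by ext; rfl
      right_inv := fun j => by ext; rfl } with hg₁def
  set g₂ : {j : Λ // ¬ q j} ≃ Λ₂ :=
    { toFun := fun j => ⟨j.1.1, (Finset.mem_union.1 j.1.2).resolve_left j.2⟩
      invFun := fun j => ⟨⟨j.1, Finset.mem_union_right _ j.2⟩,
        fun h => (Finset.disjoint_left.1 hdisj h) j.2⟩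
      left_inv := fun j => by ext; rfl
      right_inv := fun j => by ext; rfl } with hg₂def
  have hL1 : ρ.map Prod.fst
      = μ.map ((Prod.fst ∘ e) ∘ (fun (ω : Zd d → S) (j : Λ) => ω j)) := by
    rw [hρdef, marginal, Measure.map_map e.measurable (measurable_restr Λ),
      Measure.map_map measurable_fst (e.measurable.comp (measurable_restr Λ))]
    rfl
  have hR1 : (marginal μ Λ₁).map (fun (f : Λ₁ → S) (j : {j : Λ // q j}) => f (g₁ j))
      = μ.map ((fun (f : Λ₁ → S) (j : {j : Λ // q j}) => f (g₁ j))
          ∘ (fun (ω : Zd d → S) (j : Λ₁) => ω j)) := by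
    rw [marginal, Measure.map_map (measurable_reindex g₁) (measurable_restr Λ₁)]
  have h₁ : ρ.map Prod.fst
      = (marginal μ Λ₁).map (fun (f : Λ₁ → S) (j : {j : Λ // q j}) => f (g₁ j)) := by
    rw [hL1, hR1]
    rfl
  have hL2 : ρ.map Prod.snd
      = μ.map ((Prod.snd ∘ e) ∘ (fun (ω : Zd d → S) (j : Λ) => ω j)) := by
    rw [hρdef, marginal, Measure.map_map e.measurable (measurable_restr Λ),
      Measure.map_map measurable_snd (e.measurable.comp (measurable_restr Λ))]
    rfl
  have hR2 : (marginal μ Λ₂).map (fun (f : Λ₂ → S) (j : {j : Λ // ¬ q j}) => f (g₂ j))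
      = μ.map ((fun (f : Λ₂ → S) (j : {j : Λ // ¬ q j}) => f (g₂ j))
          ∘ (fun (ω : Zd d → S) (j : Λ₂) => ω j)) := by
    rw [marginal, Measure.map_map (measurable_reindex g₂) (measurable_restr Λ₂)]
  have h₂ : ρ.map Prod.snd
      = (marginal μ Λ₂).map (fun (f : Λ₂ → S) (j : {j : Λ // ¬ q j}) => f (g₂ j)) := by
    rw [hL2, hR2]
    rfl
  have e₁ : dv (ρ.map Prod.fst) (Measure.pi fun _ : {j : Λ // q j} => p)
      = dv (marginal μ Λ₁) (Measure.pi fun _ : Λ₁ => p) := by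
    rw [h₁]
    exact dv_reindex p (marginal μ Λ₁) g₁
  have e₂ : dv (ρ.map Prod.snd) (Measure.pi fun _ : {j : Λ // ¬ q j} => p)
      = dv (marginal μ Λ₂) (Measure.pi fun _ : Λ₂ => p) := by
    rw [h₂]
    exact dv_reindex p (marginal μ Λ₂) g₂
  calc dv (marginal μ Λ₁) (Measure.pi fun _ : Λ₁ => p)
        + dv (marginal μ Λ₂) (Measure.pi fun _ : Λ₂ => p)
      = dv (ρ.map Prod.fst) (Measure.pi fun _ : {j : Λ // q j} => p)
        + dv (ρ.map Prod.snd) (Measure.pi fun _ : {j : Λ // ¬ q j} => p) := by rw [e₁, e₂]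
    _ ≤ dv ρ ((Measure.pi fun _ : {j : Λ // q j} => p).prod
          (Measure.pi fun _ : {j : Λ // ¬ q j} => p)) := dv_prod_superadd ρ _ _
    _ = dv ρ ((Measure.pi fun _ : Λ => p).map e) := by
        rw [(measurePreserving_piEquivPiSubtypeProd (fun _ : Λ => p) q).map_eq]
    _ ≤ dv (marginal μ Λ) (Measure.pi fun _ : Λ => p) := by
        rw [hρdef]
        exact dv_map_le e.measurable _ _

end Superadd

lemma mem_cube {d n : ℕ} {x : Zd d} :
    x ∈ cube d n ↔ ∀ i, -(n : ℤ) ≤ x i ∧ x i ≤ (n : ℤ) - 1 := by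
  simp only [cube, Finset.mem_Icc, Pi.le_def, forall_and]

lemma cube_mono {d m n : ℕ} (h : m ≤ n) : cube d m ⊆ cube d n := by
  intro x hx
  rw [mem_cube] at hx ⊢
  intro i
  have := hx i
  have : (m : ℤ) ≤ n := by exact_mod_cast h
  omega

/-- translation offsets -/
def woff {d : ℕ} (n k : ℕ) (τ : Fin d → Fin k) : Zd d :=
  fun i => 2 * n * (τ i : ℤ) - k * n + n

lemma woff_add_cube_subset {d n k : ℕ} (τ : Fin d → Fin k) :
    (cube d n).map ⟨fun j => j + woff n k τ, fun a b hab => by simpa using hab⟩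
      ⊆ cube d (k * n) := by
  intro x hx
  obtain ⟨y, hy, rfl⟩ := Finset.mem_map.1 hx
  rw [mem_cube] at hy ⊢
  intro i
  obtain ⟨h1, h2⟩ := hy i
  have hτ1 : (0 : ℤ) ≤ (τ i : ℤ) := Int.natCast_nonneg _
  have hτ2 : (τ i : ℤ) ≤ (k : ℤ) - 1 := by
    have := (τ i).isLt
    omega
  have hn0 : (0 : ℤ) ≤ (n : ℤ) := Int.natCast_nonneg _
  show -((k * n : ℕ) : ℤ) ≤ (y + woff n k τ) i ∧ (y + woff n k τ) i ≤ ((k * n : ℕ) : ℤ) - 1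
  simp only [Pi.add_apply, woff]
  have hmul1 : (0:ℤ) ≤ 2 * n * (τ i : ℤ) := by positivity
  have hmul2 : 2 * (n:ℤ) * (τ i : ℤ) ≤ 2 * n * ((k:ℤ) - 1) :=
    mul_le_mul_of_nonneg_left hτ2 (by positivity)
  push_cast
  constructor <;> nlinarith

lemma woff_disjoint {d n k : ℕ} (hn : 1 ≤ n) {τ τ' : Fin d → Fin k} (hττ' : τ ≠ τ') :
    Disjoint ((cube d n).map ⟨fun j => j + woff n k τ, fun a b hab => by simpa using hab⟩)
      ((cube d n).map ⟨fun j => j + woff n k τ', fun a b hab => by simpa using hab⟩) := by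
  rw [Finset.disjoint_left]
  rintro x hx hx'
  obtain ⟨y, hy, hyx⟩ := Finset.mem_map.1 hx
  obtain ⟨y', hy', hyx'⟩ := Finset.mem_map.1 hx'
  refine hττ' (funext fun i => ?_)
  rw [mem_cube] at hy hy'
  obtain ⟨a1, a2⟩ := hy i
  obtain ⟨b1, b2⟩ := hy' i
  have hco : y i + woff n k τ i = y' i + woff n k τ' i := by
    have h1 : (y + woff n k τ) i = x i := congrFun hyx i
    have h2 : (y' + woff n k τ') i = x i := congrFun hyx' i
    simp only [Pi.add_apply] at h1 h2
    omega
  simp only [woff] at hco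
  have hkey : 2 * (n:ℤ) * ((τ i : ℤ) - (τ' i : ℤ)) = y' i - y i := by ring_nf; ring_nf at hco; omega
  have hn' : (1:ℤ) ≤ n := by exact_mod_cast hn
  have : (τ i : ℤ) = (τ' i : ℤ) := by nlinarith [sq_nonneg ((τ i : ℤ) - (τ' i : ℤ))]
  exact Fin.ext (by exact_mod_cast this)

section CubeSuper
variable {S : Type*} [MeasurableSpace S] (p : Measure S) [IsProbabilityMeasure p]
  {d : ℕ} (μ : Measure (Zd d → S)) [IsProbabilityMeasure μ]

/-- iterated superadditivity over a finite family of pairwise disjoint regions -/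
lemma dv_marginal_sum_le {ι : Type*} [DecidableEq ι] (s : Finset ι) (F : ι → Finset (Zd d))
    (hdisj : ∀ t ∈ s, ∀ t' ∈ s, t ≠ t' → Disjoint (F t) (F t')) :
    ∑ t ∈ s, dv (marginal μ (F t)) (Measure.pi fun _ : F t => p)
      ≤ dv (marginal μ (s.biUnion F)) (Measure.pi fun _ : s.biUnion F => p) := by
  classical
  induction s using Finset.induction_on with
  | empty => simp
  | insert a s ha ih =>
    rw [Finset.sum_insert ha, Finset.biUnion_insert]
    have hsub : ∀ t ∈ s, ∀ t' ∈ s, t ≠ t' → Disjoint (F t) (F t') :=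
      fun t ht t' ht' h => hdisj t (Finset.mem_insert_of_mem ht) t'
        (Finset.mem_insert_of_mem ht') h
    have hdisj2 : Disjoint (F a) (s.biUnion F) := by
      rw [Finset.disjoint_biUnion_right]
      intro t ht
      exact hdisj a (Finset.mem_insert_self a s) t (Finset.mem_insert_of_mem ht)
        (fun h => ha (h ▸ ht))
    calc dv (marginal μ (F a)) (Measure.pi fun _ : F a => p)
          + ∑ t ∈ s, dv (marginal μ (F t)) (Measure.pi fun _ : F t => p)
        ≤ dv (marginal μ (F a)) (Measure.pi fun _ : F a => p)
          + dv (marginal μ (s.biUnion F)) (Measure.pi fun _ : s.biUnion F => p) :=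
          add_le_add_right (ih hsub) _
      _ ≤ _ := dv_marginal_superadd p μ hdisj2

/-- the key superadditivity bound along multiples. -/
lemma dv_cube_superadd (hinv : ShiftInvariant μ) {n k : ℕ} (hn : 1 ≤ n) :
    (k : ℝ≥0∞) ^ d * dv (marginal μ (cube d n)) (Measure.pi fun _ : cube d n => p)
      ≤ dv (marginal μ (cube d (k * n))) (Measure.pi fun _ : cube d (k * n) => p) := by
  classical
  set F : (Fin d → Fin k) → Finset (Zd d) := fun τ =>
    (cube d n).map ⟨fun j => j + woff n k τ, fun a b hab => by simpa using hab⟩ with hF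
  have hdisj : ∀ τ ∈ Finset.univ, ∀ τ' ∈ Finset.univ, τ ≠ τ' → Disjoint (F τ) (F τ') :=
    fun τ _ τ' _ h => woff_disjoint hn h
  have hsum := dv_marginal_sum_le p μ Finset.univ F hdisj
  have hterm : ∀ τ : Fin d → Fin k,
      dv (marginal μ (F τ)) (Measure.pi fun _ : F τ => p)
        = dv (marginal μ (cube d n)) (Measure.pi fun _ : cube d n => p) :=
    fun τ => dv_marginal_translate p μ hinv (woff n k τ) (cube d n)
  have hcard : ∑ τ : Fin d → Fin k, dv (marginal μ (F τ)) (Measure.pi fun _ : F τ => p)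
      = (k : ℝ≥0∞) ^ d * dv (marginal μ (cube d n)) (Measure.pi fun _ : cube d n => p) := by
    rw [Finset.sum_congr rfl fun τ _ => hterm τ, Finset.sum_const, Finset.card_univ,
      Fintype.card_fun, Fintype.card_fin, Fintype.card_fin, nsmul_eq_mul, Nat.cast_pow]
  have hsub : Finset.univ.biUnion F ⊆ cube d (k * n) :=
    Finset.biUnion_subset.2 fun τ _ => woff_add_cube_subset τ
  calc (k : ℝ≥0∞) ^ d * dv (marginal μ (cube d n)) (Measure.pi fun _ : cube d n => p)
      = ∑ τ : Fin d → Fin k, dv (marginal μ (F τ)) (Measure.pi fun _ : F τ => p) := hcard.symm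
    _ ≤ dv (marginal μ (Finset.univ.biUnion F))
        (Measure.pi fun _ : Finset.univ.biUnion F => p) := hsum
    _ ≤ _ := dv_marginal_mono p μ hsub


end CubeSuper

/-- ratio tendsto lemma in ℝ≥0∞ -/
lemma ratio_tendsto (n : ℕ) (hn : 1 ≤ n) :
    Tendsto (fun k : ℕ => ((k : ℝ≥0∞) / ((2 * ((k + 1) * n) : ℕ) : ℝ≥0∞)))
      atTop (nhds (1 / ((2 * n : ℕ) : ℝ≥0∞))) := by
  have hreal : Tendsto (fun k : ℕ => (k : ℝ) / ((2 * ((k + 1) * n) : ℕ) : ℝ))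
      atTop (nhds (1 / ((2 * n : ℕ) : ℝ))) := by
    have h1 : Tendsto (fun k : ℕ => 1 - 1 / ((k : ℝ) + 1)) atTop (nhds 1) := by
      have := tendsto_one_div_add_atTop_nhds_zero_nat (𝕜 := ℝ)
      simpa using tendsto_const_nhds.sub this
    have h2 : Tendsto (fun k : ℕ => (1 - 1 / ((k : ℝ) + 1)) * (1 / ((2 * n : ℕ) : ℝ)))
        atTop (nhds (1 * (1 / ((2 * n : ℕ) : ℝ)))) := h1.mul_const _
    rw [one_mul] at h2
    refine h2.congr fun k => ?_
    have hk1 : (0:ℝ) < (k:ℝ) + 1 := by positivity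
    have hn' : (0:ℝ) < (n:ℝ) := by exact_mod_cast hn
    push_cast
    have h5 : (1 - 1/((k:ℝ)+1)) = (k:ℝ)/((k:ℝ)+1) := by field_simp; ring
    rw [h5, div_mul_div_comm, mul_one]
    congr 1
    ring
  have heq : ∀ k : ℕ, ((k : ℝ≥0∞) / ((2 * ((k + 1) * n) : ℕ) : ℝ≥0∞))
      = ENNReal.ofReal ((k : ℝ) / ((2 * ((k + 1) * n) : ℕ) : ℝ)) := by
    intro k
    rw [ENNReal.ofReal_div_of_pos (by positivity), ENNReal.ofReal_natCast,
      ENNReal.ofReal_natCast]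
  have heq2 : (1 : ℝ≥0∞) / ((2 * n : ℕ) : ℝ≥0∞)
      = ENNReal.ofReal (1 / ((2 * n : ℕ) : ℝ)) := by
    rw [ENNReal.ofReal_div_of_pos (by positivity), ENNReal.ofReal_one, ENNReal.ofReal_natCast]
  rw [heq2]
  exact (ENNReal.tendsto_ofReal hreal).congr (fun k => (heq k).symm)

lemma fekete_limit {d : ℕ} {A : ℕ → ℝ≥0∞}
    (hmono : ∀ m n : ℕ, m ≤ n → A m ≤ A n)
    (hsuper : ∀ n k : ℕ, 1 ≤ n → (k : ℝ≥0∞) ^ d * A n ≤ A (k * n)) :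
    Tendsto (fun n : ℕ => A n / ((2 * (n : ℝ≥0∞)) ^ d)) atTop
      (nhds (limsup (fun n : ℕ => A n / ((2 * (n : ℝ≥0∞)) ^ d)) atTop)) := by
  set f : ℕ → ℝ≥0∞ := fun n => A n / ((2 * (n : ℝ≥0∞)) ^ d) with hf_def
  have key : ∀ n : ℕ, 1 ≤ n → f n ≤ liminf f atTop := by
    intro n hn
    set g : ℕ → ℝ≥0∞ := fun m =>
      A n * (((m / n : ℕ) : ℝ≥0∞) / ((2 * ((m / n + 1) * n) : ℕ) : ℝ≥0∞)) ^ d with hg_def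
    have hev : ∀ᶠ m in atTop, g m ≤ f m := by
      rw [eventually_atTop]
      refine ⟨n, fun m hm => ?_⟩
      set k := m / n with hk_def
      have hk1 : 1 ≤ k := (Nat.one_le_div_iff hn).2 hm
      have step1 : (k : ℝ≥0∞) ^ d * A n ≤ A m :=
        (hsuper n k hn).trans (hmono _ _ (Nat.div_mul_le_self m n))
      have hmlt : 2 * m ≤ 2 * ((k + 1) * n) := by
        have hlt : m < (k + 1) * n := by
          rw [hk_def, add_mul, one_mul]
          have h1 := Nat.div_add_mod m n
          have h2 := Nat.mod_lt m (by omega : 0 < n)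
          calc m = m / n * n + m % n := by rw [Nat.mul_comm] at h1; omega
            _ < m / n * n + n := by omega
        omega
      have step2 : (2 * (m : ℝ≥0∞)) ^ d ≤ ((2 * ((k + 1) * n) : ℕ) : ℝ≥0∞) ^ d := by
        have hcast : (2 * (m : ℝ≥0∞)) = ((2 * m : ℕ) : ℝ≥0∞) := by push_cast; ring
        rw [hcast]
        exact pow_le_pow_left' (by exact_mod_cast hmlt) d
      have hgm : g m = (k : ℝ≥0∞) ^ d * A n / ((2 * ((k + 1) * n) : ℕ) : ℝ≥0∞) ^ d := by
        rw [hg_def]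
        simp only [div_eq_mul_inv, mul_pow, ENNReal.inv_pow]
        ring
      rw [hgm]
      exact ENNReal.div_le_div step1 step2
    have hg : Tendsto g atTop (nhds (A n * ((1 : ℝ≥0∞) / ((2 * n : ℕ) : ℝ≥0∞)) ^ d)) := by
      have hr := ratio_tendsto n hn
      have hpow : Tendsto (fun k : ℕ =>
          (((k : ℝ≥0∞) / ((2 * ((k + 1) * n) : ℕ) : ℝ≥0∞))) ^ d) atTop
          (nhds (((1 : ℝ≥0∞) / ((2 * n : ℕ) : ℝ≥0∞)) ^ d)) :=
        ((ENNReal.continuous_pow d).tendsto _).comp hr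
      have hmul : Tendsto (fun k : ℕ =>
          A n * (((k : ℝ≥0∞) / ((2 * ((k + 1) * n) : ℕ) : ℝ≥0∞))) ^ d) atTop
          (nhds (A n * ((1 : ℝ≥0∞) / ((2 * n : ℕ) : ℝ≥0∞)) ^ d)) := by
        refine ENNReal.Tendsto.const_mul hpow (Or.inl ?_)
        refine pow_ne_zero d ?_
        rw [one_div]
        exact ENNReal.inv_ne_zero.2 (ENNReal.natCast_ne_top _)
      exact hmul.comp (Nat.tendsto_div_const_atTop (by omega))
    have hlim_eq : A n * ((1 : ℝ≥0∞) / ((2 * n : ℕ) : ℝ≥0∞)) ^ d = f n := by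
      rw [hf_def]
      simp only [one_div, ENNReal.inv_pow, div_eq_mul_inv]
      push_cast
      ring
    calc f n = A n * ((1 : ℝ≥0∞) / ((2 * n : ℕ) : ℝ≥0∞)) ^ d := hlim_eq.symm
      _ = liminf g atTop := hg.liminf_eq.symm
      _ ≤ liminf f atTop := liminf_le_liminf hev
  have h1 : limsup f atTop ≤ liminf f atTop := by
    refine limsup_le_of_le (by isBoundedDefault) ?_
    filter_upwards [eventually_ge_atTop 1] with m hm using key m hm
  exact tendsto_of_liminf_eq_limsup (le_antisymm (liminf_le_limsup) h1) rfl


/-- For a shift-invariant probability measure `μ` on `S^{ℤ^d}` the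
normalized relative entropies `(1/(2n)^d) I(μ_{Λ_n}; p^{⊗Λ_n})` converge in `[0,∞]`,
and the limit is the specific entropy `ℐ(μ)` (defined as the limsup). -/
theorem specEnt_tendsto
    {d : ℕ} (hd : 1 ≤ d) {S : Type*} [MeasurableSpace S] [StandardBorelSpace S]
    (p : Measure S) [IsProbabilityMeasure p]
    (μ : Measure (Zd d → S)) [IsProbabilityMeasure μ] (hinv : ShiftInvariant μ) :
    Tendsto
      (fun n : ℕ =>
        relEnt (marginal μ (cube d n)) (Measure.pi fun _ : cube d n => p)
          / ((2 * n : ℝ≥0∞) ^ d))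
      atTop (nhds (specEnt p μ)) := by
  classical
  set A : ℕ → ℝ≥0∞ := fun n =>
    relEnt (marginal μ (cube d n)) (Measure.pi fun _ : cube d n => p) with hA
  have hAdv : ∀ n, A n = dv (marginal μ (cube d n)) (Measure.pi fun _ : cube d n => p) :=
    fun n => relEnt_eq_dv
  have hmono : ∀ m n : ℕ, m ≤ n → A m ≤ A n := by
    intro m n h
    rw [hAdv m, hAdv n]
    exact dv_marginal_mono p μ (cube_mono h)
  have hsuper : ∀ n k : ℕ, 1 ≤ n → (k : ℝ≥0∞) ^ d * A n ≤ A (k * n) := by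
    intro n k hn
    rw [hAdv n, hAdv (k * n)]
    exact dv_cube_superadd p μ hinv hn
  have hfin := fekete_limit (d := d) hmono hsuper
  simp only [specEnt]
  exact hfin
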